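/- (Factorization of tree sums over the cut node.) Under the hypotheses of the previous statement, for any node N ∈ H1 ∪ {*} and any set W of edges of G_{H1}: Σ_{τ ∈ Θ(N), W ⊆ τ} π(τ) = (Σ_{τ1 ∈ Θ_1(N), W ⊆ τ1} π(τ1)) · (Σ_{τ2 ∈ Θ_2(*)} π(τ2)), where Θ(N), Θ_1(N), Θ_2(*) denote the spanning trees of G, G_{H1}, G_{H2} rooted at N, N, * respectively. Consequently, with q(x) = 1/Σ_{τ∈Θ(*)} π(τ) and q_1(x) = 1/Σ_{τ1∈Θ_1(*)} π(τ1), one has q(x) Σ_{τ∈Θ(N), W⊆τ} π(τ) = q_1(x) Σ_{τ1∈Θ_1(N), W⊆τ1} π(τ1). -/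

import Mathlib

/-- A multidigraph: a set of nodes `V`, a set of edges `E`, and source/target maps. -/
structure Multidigraph (V E : Type*) where
  src : E → V
  tgt : E → V

namespace Multidigraph

variable {V E : Type*}

/-- One-step edge relation using only the edges in `τ`. -/
def Rel (G : Multidigraph V E) (τ : Set E) (a b : V) : Prop :=
  ∃ e ∈ τ, G.src e = a ∧ G.tgt e = b

/-- Undirected (symmetrized) one-step relation. -/
def URel (G : Multidigraph V E) (a b : V) : Prop :=
  G.Rel Set.univ a b ∨ G.Rel Set.univ b a

/-- Node set of the (weakly) connected component containing `v`. -/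
def component (G : Multidigraph V E) (v : V) : Set V :=
  {w | Relation.ReflTransGen G.URel v w}

/-- `τ` is a spanning tree of the subgraph of `G` induced on the node set `W`,
rooted at `r`: all edges stay inside `W`, every non-root node of `W` has exactly
one outgoing edge in `τ`, the root has none, and every node of `W` reaches `r`
through `τ`. -/
def IsSpanningTreeOn (G : Multidigraph V E) (W : Set V) (τ : Finset E) (r : V) : Prop :=
  (∀ e ∈ τ, G.src e ∈ W ∧ G.tgt e ∈ W) ∧
  (∀ v ∈ W, v ≠ r → ∃! e, e ∈ τ ∧ G.src e = v) ∧
  (∀ e ∈ τ, G.src e ≠ r) ∧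
  (∀ v ∈ W, Relation.ReflTransGen (G.Rel (τ : Set E)) v r)

/-- Spanning tree of `G` rooted at `r`. -/
def IsSpanningTree (G : Multidigraph V E) (τ : Finset E) (r : V) : Prop :=
  G.IsSpanningTreeOn Set.univ τ r

/-- A cycle: a nonempty closed directed path with pairwise distinct nodes. -/
def IsCycle (G : Multidigraph V E) (l : List E) : Prop :=
  l ≠ [] ∧ (l.map G.src).Nodup ∧
  l.Chain' (fun a b => G.tgt a = G.src b) ∧
  ∀ h : l ≠ [], G.tgt (l.getLast h) = G.src (l.head h)

def StronglyConnected (G : Multidigraph V E) : Prop :=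
  ∀ a b : V, Relation.ReflTransGen (G.Rel Set.univ) a b

def Connected (G : Multidigraph V E) : Prop :=
  ∀ a b : V, Relation.ReflTransGen G.URel a b

/-- Incidence matrix of a multidigraph. -/
def incidence [DecidableEq V] (G : Multidigraph V E) : Matrix V E ℝ := fun v e =>
  if G.tgt e = v ∧ G.src e ≠ v then 1
  else if G.src e = v ∧ G.tgt e ≠ v then (-1 : ℝ) else 0

end Multidigraph

open scoped Classical

private lemma rtg_mono {V E : Type} (G : Multidigraph V E) {σ τ : Finset E} (h : σ ⊆ τ)
    {a b : V} (hab : Relation.ReflTransGen (G.Rel σ) a b) :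
    Relation.ReflTransGen (G.Rel τ) a b :=
  Relation.ReflTransGen.mono (p := G.Rel τ)
    (fun _ _ (hr : G.Rel σ _ _) => (let ⟨e, he, hp⟩ := hr; ⟨e, h he, hp⟩)) a b hab

private lemma key14 {V E : Type} [Fintype V] [Fintype E] {F : Type} [Field F]
    (G : Multidigraph V E)
    (star : V) (H1 H2 : Set V)
    (hdisj : Disjoint H1 H2) (hstar1 : star ∉ H1) (hstar2 : star ∉ H2)
    (hcover : H1 ∪ H2 ∪ {star} = Set.univ)
    (hsep : ∀ e : E, ¬ (G.src e ∈ H1 ∧ G.tgt e ∈ H2) ∧ ¬ (G.src e ∈ H2 ∧ G.tgt e ∈ H1))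
    (N : V) (hN : N ∈ H1 ∪ {star})
    (π : E → F) (W : Finset E)
    (hW : ∀ e ∈ W, G.src e ∈ H1 ∪ {star} ∧ G.tgt e ∈ H1 ∪ {star}) :
    (∑ τ ∈ Finset.univ.filter (fun τ : Finset E => G.IsSpanningTree τ N ∧ W ⊆ τ),
        ∏ e ∈ τ, π e)
      = (∑ τ ∈ Finset.univ.filter
            (fun τ : Finset E => G.IsSpanningTreeOn (H1 ∪ {star}) τ N ∧ W ⊆ τ),
          ∏ e ∈ τ, π e)
        * (∑ τ ∈ Finset.univ.filter
            (fun τ : Finset E => G.IsSpanningTreeOn (H2 ∪ {star}) τ star),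
          ∏ e ∈ τ, π e) := by
  -- notation
  set A : Set V := H1 ∪ {star} with hAdef
  set B : Set V := H2 ∪ {star} with hBdef
  have hall : ∀ v : V, v ∈ H1 ∨ v ∈ H2 ∨ v = star := by
    intro v
    have : v ∈ H1 ∪ H2 ∪ {star} := hcover ▸ Set.mem_univ v
    rcases this with (h | h) | h
    · exact Or.inl h
    · exact Or.inr (Or.inl h)
    · exact Or.inr (Or.inr h)
  have hAH2 : ∀ v, v ∈ A → v ∈ H2 → False := by
    rintro v (hv | hv) hv2
    · exact hdisj.le_bot ⟨hv, hv2⟩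
    · exact hstar2 (hv ▸ hv2)
  have hBH1 : ∀ v, v ∈ B → v ∈ H1 → False := by
    rintro v (hv | hv) hv1
    · exact hdisj.le_bot ⟨hv1, hv⟩
    · exact hstar1 (hv ▸ hv1)
  have hsideA : ∀ e : E, G.src e ∈ H1 → G.tgt e ∈ A := by
    intro e he
    rcases hall (G.tgt e) with h | h | h
    · exact Or.inl h
    · exact absurd ⟨he, h⟩ (hsep e).1
    · exact Or.inr h
  have hsideB : ∀ e : E, G.src e ∈ H2 → G.tgt e ∈ B := by
    intro e he
    rcases hall (G.tgt e) with h | h | h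
    · exact absurd ⟨he, h⟩ (hsep e).2
    · exact Or.inl h
    · exact Or.inr h
  have hNB : N ∉ H2 := fun h => hAH2 N hN h
  -- B-invariance
  have inv : ∀ (τ : Finset E), (∀ e ∈ τ, G.src e = star → G.tgt e ∈ B) →
      ∀ v w : V, Relation.ReflTransGen (G.Rel τ) v w → v ∈ B → w ∈ B := by
    intro τ hτ v w hvw
    induction hvw using Relation.ReflTransGen.head_induction_on with
    | refl => exact id
    | head h' _ ih =>
      intro hv
      obtain ⟨e, he, hsrc, htgt⟩ := h'
      rcases hv with hv | hv
      · exact ih (htgt ▸ hsideB e (hsrc ▸ hv))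
      · exact ih (htgt ▸ hτ e he (hsrc ▸ hv.symm ▸ rfl))
  -- Claim C: in a spanning tree of G rooted at N, star's outgoing edges go into H1
  have claimC : ∀ (τ : Finset E), G.IsSpanningTree τ N →
      ∀ e ∈ τ, G.src e = star → G.tgt e ∈ H1 := by
    intro τ hτ e he hse
    obtain ⟨-, huniq, hroot, hreach⟩ := hτ
    have hNs : N ≠ star := fun h => hroot e he (hse.trans h.symm)
    have hNH1 : N ∈ H1 := by
      rcases hN with h | h
      · exact h
      · exact absurd h hNs
    by_contra htgt
    have htB : G.tgt e ∈ B := by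
      rcases hall (G.tgt e) with h | h | h
      · exact absurd h htgt
      · exact Or.inl h
      · exact Or.inr h
    have huniq' := huniq star (Set.mem_univ _) (Ne.symm hNs)
    have hstar_out : ∀ e' ∈ τ, G.src e' = star → G.tgt e' ∈ B := by
      intro e' he' hse'
      have : e' = e := huniq'.unique ⟨he', hse'⟩ ⟨he, hse⟩
      exact this ▸ htB
    have : N ∈ B := inv τ hstar_out star N (hreach star (Set.mem_univ _)) (Or.inr rfl)
    exact hBH1 N this hNH1
  -- the split maps
  set f1 : Finset E → Finset E := fun τ => τ.filter (fun e => G.src e ∈ A) with hf1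
  set f2 : Finset E → Finset E := fun τ => τ.filter (fun e => G.src e ∈ H2) with hf2
  -- forward split
  have hsplit : ∀ τ : Finset E, G.IsSpanningTree τ N →
      G.IsSpanningTreeOn A (f1 τ) N ∧ G.IsSpanningTreeOn B (f2 τ) star ∧
      τ = f1 τ ∪ f2 τ := by
    intro τ hτ
    obtain ⟨-, huniq, hroot, hreach⟩ := hτ
    have hend1 : ∀ e ∈ f1 τ, G.src e ∈ A ∧ G.tgt e ∈ A := by
      intro e he
      rw [Finset.mem_filter] at he
      refine ⟨he.2, ?_⟩
      rcases he.2 with h | h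
      · exact hsideA e h
      · exact Or.inl (claimC τ ⟨fun _ _ => ⟨Set.mem_univ _, Set.mem_univ _⟩, huniq, hroot, hreach⟩ e he.1 h)
    have ht1 : G.IsSpanningTreeOn A (f1 τ) N := by
      refine ⟨hend1, ?_, ?_, ?_⟩
      · intro v hv hvN
        obtain ⟨e, ⟨he, hse⟩, hu⟩ := huniq v (Set.mem_univ _) hvN
        refine ⟨e, ⟨Finset.mem_filter.mpr ⟨he, hse ▸ hv⟩, hse⟩, ?_⟩
        intro e' ⟨he', hse'⟩
        exact hu e' ⟨(Finset.mem_filter.mp he').1, hse'⟩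
      · intro e he
        exact hroot e (Finset.mem_filter.mp he).1
      · intro v hv
        have hp := hreach v (Set.mem_univ _)
        revert hv
        induction hp using Relation.ReflTransGen.head_induction_on with
        | refl => exact fun _ => Relation.ReflTransGen.refl
        | head h' hrest ih =>
          rename_i a c
          intro ha
          obtain ⟨e, he, hsrc, htgt⟩ := h'
          have hef1 : e ∈ f1 τ := Finset.mem_filter.mpr ⟨he, hsrc ▸ ha⟩
          have hc : c ∈ A := htgt ▸ (hend1 e hef1).2
          exact Relation.ReflTransGen.head ⟨e, hef1, hsrc, htgt⟩ (ih hc)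
    have ht2 : G.IsSpanningTreeOn B (f2 τ) star := by
      refine ⟨?_, ?_, ?_, ?_⟩
      · intro e he
        rw [Finset.mem_filter] at he
        exact ⟨Or.inl he.2, hsideB e he.2⟩
      · intro v hv hvs
        have hv2 : v ∈ H2 := by
          rcases hv with h | h
          · exact h
          · exact absurd h hvs
        have hvN : v ≠ N := fun h => hNB (h ▸ hv2)
        obtain ⟨e, ⟨he, hse⟩, hu⟩ := huniq v (Set.mem_univ _) hvN
        refine ⟨e, ⟨Finset.mem_filter.mpr ⟨he, hse ▸ hv2⟩, hse⟩, ?_⟩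
        intro e' ⟨he', hse'⟩
        exact hu e' ⟨(Finset.mem_filter.mp he').1, hse'⟩
      · intro e he
        rw [Finset.mem_filter] at he
        exact fun h => hstar2 (h ▸ he.2)
      · intro v hv
        have hp := hreach v (Set.mem_univ _)
        revert hv
        induction hp using Relation.ReflTransGen.head_induction_on with
        | refl =>
          intro hNBmem
          rcases hN with h | h
          · exact absurd h (hBH1 N hNBmem)
          · exact h ▸ Relation.ReflTransGen.refl
        | head h' hrest ih =>
          rename_i a c
          intro ha
          rcases ha with ha | ha
          · obtain ⟨e, he, hsrc, htgt⟩ := h'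
            have hef2 : e ∈ f2 τ := Finset.mem_filter.mpr ⟨he, hsrc ▸ ha⟩
            have hc : c ∈ B := htgt ▸ hsideB e (hsrc ▸ ha)
            exact Relation.ReflTransGen.head ⟨e, hef2, hsrc, htgt⟩ (ih hc)
          · exact ha ▸ Relation.ReflTransGen.refl
    refine ⟨ht1, ht2, ?_⟩
    ext e
    simp only [hf1, hf2, Finset.mem_union, Finset.mem_filter]
    constructor
    · intro he
      rcases hall (G.src e) with h | h | h
      · exact Or.inl ⟨he, Or.inl h⟩
      · exact Or.inr ⟨he, h⟩
      · exact Or.inl ⟨he, Or.inr h⟩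
    · rintro (⟨he, -⟩ | ⟨he, -⟩) <;> exact he
  -- backward
  have hglue : ∀ τ1 τ2 : Finset E, G.IsSpanningTreeOn A τ1 N →
      G.IsSpanningTreeOn B τ2 star → G.IsSpanningTree (τ1 ∪ τ2) N := by
    intro τ1 τ2 h1 h2
    obtain ⟨hend1, huniq1, hroot1, hreach1⟩ := h1
    obtain ⟨hend2, huniq2, hroot2, hreach2⟩ := h2
    have hsrc2 : ∀ e ∈ τ2, G.src e ∈ H2 := by
      intro e he
      rcases (hend2 e he).1 with h | h
      · exact h
      · exact absurd h (hroot2 e he)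
    refine ⟨fun _ _ => ⟨Set.mem_univ _, Set.mem_univ _⟩, ?_, ?_, ?_⟩
    · intro v _ hvN
      rcases hall v with hv | hv | hv
      · obtain ⟨e, ⟨he, hse⟩, hu⟩ := huniq1 v (Or.inl hv) hvN
        refine ⟨e, ⟨Finset.mem_union_left _ he, hse⟩, ?_⟩
        rintro e' ⟨he', hse'⟩
        rcases Finset.mem_union.mp he' with h | h
        · exact hu e' ⟨h, hse'⟩
        · exact absurd (hse' ▸ hsrc2 e' h) (fun hc => hdisj.le_bot ⟨hv, hc⟩)
      · have hvs : v ≠ star := fun h => hstar2 (h ▸ hv)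
        obtain ⟨e, ⟨he, hse⟩, hu⟩ := huniq2 v (Or.inl hv) hvs
        refine ⟨e, ⟨Finset.mem_union_right _ he, hse⟩, ?_⟩
        rintro e' ⟨he', hse'⟩
        rcases Finset.mem_union.mp he' with h | h
        · exact absurd (hse' ▸ (hend1 e' h).1) (fun hc => hAH2 v hc hv)
        · exact hu e' ⟨h, hse'⟩
      · subst hv
        obtain ⟨e, ⟨he, hse⟩, hu⟩ := huniq1 v (Or.inr rfl) hvN
        refine ⟨e, ⟨Finset.mem_union_left _ he, hse⟩, ?_⟩
        rintro e' ⟨he', hse'⟩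
        rcases Finset.mem_union.mp he' with h | h
        · exact hu e' ⟨h, hse'⟩
        · exact absurd (hse' ▸ hsrc2 e' h) (fun hc => hstar2 hc)
    · intro e he
      rcases Finset.mem_union.mp he with h | h
      · exact hroot1 e h
      · intro hc
        exact hNB (hc ▸ hsrc2 e h)
    · intro v _
      rcases hall v with hv | hv | hv
      · exact rtg_mono G Finset.subset_union_left (hreach1 v (Or.inl hv))
      · exact (rtg_mono G Finset.subset_union_right (hreach2 v (Or.inl hv))).trans
          (rtg_mono G Finset.subset_union_left (hreach1 star (Or.inr rfl)))
      · exact hv ▸ rtg_mono G Finset.subset_union_left (hreach1 star (Or.inr rfl))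
  -- recover components from union
  have hrec1 : ∀ τ1 τ2 : Finset E, G.IsSpanningTreeOn A τ1 N →
      G.IsSpanningTreeOn B τ2 star → f1 (τ1 ∪ τ2) = τ1 ∧ f2 (τ1 ∪ τ2) = τ2 := by
    intro τ1 τ2 h1 h2
    have hsrc2 : ∀ e ∈ τ2, G.src e ∈ H2 := by
      intro e he
      rcases (h2.1 e he).1 with h | h
      · exact h
      · exact absurd h (h2.2.2.1 e he)
    constructor
    · ext e
      simp only [hf1, Finset.mem_filter, Finset.mem_union]
      constructor
      · rintro ⟨h | h, hA⟩
        · exact h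
        · exact absurd (hsrc2 e h) (fun hc => hAH2 _ hA hc)
      · intro h
        exact ⟨Or.inl h, (h1.1 e h).1⟩
    · ext e
      simp only [hf2, Finset.mem_filter, Finset.mem_union]
      constructor
      · rintro ⟨h | h, hA⟩
        · exact absurd (h1.1 e h).1 (fun hc => hAH2 _ hc hA)
        · exact h
      · intro h
        exact ⟨Or.inr h, hsrc2 e h⟩
  -- disjointness of the two parts
  have hdisj12 : ∀ τ1 τ2 : Finset E, G.IsSpanningTreeOn A τ1 N →
      G.IsSpanningTreeOn B τ2 star → Disjoint τ1 τ2 := by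
    intro τ1 τ2 h1 h2
    rw [Finset.disjoint_left]
    intro e he1 he2
    rcases (h2.1 e he2).1 with h | h
    · exact hAH2 _ (h1.1 e he1).1 h
    · exact h2.2.2.1 e he2 h
  -- now the sum bijection
  rw [Finset.sum_mul_sum, ← Finset.sum_product']
  refine Finset.sum_nbij' (fun τ => (f1 τ, f2 τ)) (fun p => p.1 ∪ p.2) ?_ ?_ ?_ ?_ ?_
  · intro τ hτ
    rw [Finset.mem_filter] at hτ
    obtain ⟨-, hst, hWτ⟩ := hτ
    obtain ⟨ht1, ht2, -⟩ := hsplit τ hst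
    rw [Finset.mem_product]
    refine ⟨Finset.mem_filter.mpr ⟨Finset.mem_univ _, ht1, ?_⟩,
      Finset.mem_filter.mpr ⟨Finset.mem_univ _, ht2⟩⟩
    intro e he
    exact Finset.mem_filter.mpr ⟨hWτ he, (hW e he).1⟩
  · intro p hp
    rw [Finset.mem_product] at hp
    obtain ⟨hp1, hp2⟩ := hp
    rw [Finset.mem_filter] at hp1 hp2
    refine Finset.mem_filter.mpr ⟨Finset.mem_univ _, hglue p.1 p.2 hp1.2.1 hp2.2, ?_⟩
    exact hp1.2.2.trans Finset.subset_union_left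
  · intro τ hτ
    rw [Finset.mem_filter] at hτ
    exact (hsplit τ hτ.2.1).2.2.symm
  · intro p hp
    rw [Finset.mem_product] at hp
    obtain ⟨hp1, hp2⟩ := hp
    rw [Finset.mem_filter] at hp1 hp2
    obtain ⟨h1, h2⟩ := hrec1 p.1 p.2 hp1.2.1 hp2.2
    exact Prod.ext h1 h2
  · intro τ hτ
    rw [Finset.mem_filter] at hτ
    obtain ⟨ht1, ht2, hu⟩ := hsplit τ hτ.2.1
    have hd : Disjoint (f1 τ) (f2 τ) := hdisj12 _ _ ht1 ht2
    calc ∏ e ∈ τ, π e = ∏ e ∈ f1 τ ∪ f2 τ, π e := by rw [← hu]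
      _ = (∏ e ∈ f1 τ, π e) * ∏ e ∈ f2 τ, π e := Finset.prod_union hd

/-- Factorization of tree sums over the cut node. -/
theorem stmt14 {V E : Type} [Fintype V] [Fintype E] {F : Type} [Field F]
    (G : Multidigraph V E) (hconn : G.Connected)
    (star : V) (H1 H2 : Set V)
    (hdisj : Disjoint H1 H2) (hstar1 : star ∉ H1) (hstar2 : star ∉ H2)
    (hcover : H1 ∪ H2 ∪ {star} = Set.univ)
    (hsep : ∀ e : E, ¬ (G.src e ∈ H1 ∧ G.tgt e ∈ H2) ∧ ¬ (G.src e ∈ H2 ∧ G.tgt e ∈ H1))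
    (N : V) (hN : N ∈ H1 ∪ {star})
    (π : E → F) (W : Finset E)
    (hW : ∀ e ∈ W, G.src e ∈ H1 ∪ {star} ∧ G.tgt e ∈ H1 ∪ {star}) :
    (∑ τ ∈ Finset.univ.filter (fun τ : Finset E => G.IsSpanningTree τ N ∧ W ⊆ τ),
        ∏ e ∈ τ, π e)
      = (∑ τ ∈ Finset.univ.filter
            (fun τ : Finset E => G.IsSpanningTreeOn (H1 ∪ {star}) τ N ∧ W ⊆ τ),
          ∏ e ∈ τ, π e)
        * (∑ τ ∈ Finset.univ.filter
            (fun τ : Finset E => G.IsSpanningTreeOn (H2 ∪ {star}) τ star),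
          ∏ e ∈ τ, π e) ∧
    ((∑ τ ∈ Finset.univ.filter (fun τ : Finset E => G.IsSpanningTree τ star),
        ∏ e ∈ τ, π e) ≠ 0 →
     (∑ τ ∈ Finset.univ.filter
          (fun τ : Finset E => G.IsSpanningTreeOn (H1 ∪ {star}) τ star),
        ∏ e ∈ τ, π e) ≠ 0 →
      (∑ τ ∈ Finset.univ.filter (fun τ : Finset E => G.IsSpanningTree τ star),
          ∏ e ∈ τ, π e)⁻¹
        * (∑ τ ∈ Finset.univ.filter (fun τ : Finset E => G.IsSpanningTree τ N ∧ W ⊆ τ),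
            ∏ e ∈ τ, π e)
      = (∑ τ ∈ Finset.univ.filter
            (fun τ : Finset E => G.IsSpanningTreeOn (H1 ∪ {star}) τ star),
            ∏ e ∈ τ, π e)⁻¹
        * (∑ τ ∈ Finset.univ.filter
            (fun τ : Finset E => G.IsSpanningTreeOn (H1 ∪ {star}) τ N ∧ W ⊆ τ),
            ∏ e ∈ τ, π e)) := by
  have h1 := key14 G star H1 H2 hdisj hstar1 hstar2 hcover hsep N hN π W hW
  have h2 := key14 G star H1 H2 hdisj hstar1 hstar2 hcover hsep star (Or.inr rfl) π ∅
      (by intro e he; exact absurd he (Finset.notMem_empty e))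
  simp only [Finset.empty_subset, and_true] at h2
  refine ⟨h1, ?_⟩
  intro hS hS1
  have hS2 : (∑ τ ∈ Finset.univ.filter
      (fun τ : Finset E => G.IsSpanningTreeOn (H2 ∪ {star}) τ star), ∏ e ∈ τ, π e) ≠ 0 := by
    intro h
    exact hS (h2.trans (by rw [h, mul_zero]))
  have keyalg : ∀ a b c : F, b ≠ 0 → (a * b)⁻¹ * (c * b) = a⁻¹ * c := by
    intro a b c hb
    rw [mul_inv, mul_comm c b, ← mul_assoc, mul_assoc a⁻¹ b⁻¹ b, inv_mul_cancel₀ hb,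
      mul_one]
  rw [h1, h2]
  exact keyalg _ _ _ hS2
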